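/- Let δ: L → L⊗L be a linear map on a Lie algebra L satisfying the 1-cocycle condition δ([x,y]) = [x⊗1 + 1⊗x, δ(y)] - [y⊗1 + 1⊗y, δ(x)]. Suppose T is a Lie algebra derivation of L and δ∘T = (T⊗1 + 1⊗T)∘δ. Define δ_z := (τ_z ⊗ 1)∘δ, where τ_z = e^{zT} acting formally (as a map L → (L⊗L)[[z]] assuming T is locally nilpotent). Then δ_z satisfies the translated cocycle identity δ_z([x,y]) = [τ_z(x)⊗1 + 1⊗x, δ_z(y)] - [τ_z(y)⊗1 + 1⊗y, δ_z(x)] for all x,y ∈ L. -/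

import Mathlib

open TensorProduct

private theorem leibniz_pow' {k L : Type*} [Field k] [LieRing L] [LieAlgebra k L]
    (T : L →ₗ[k] L) (hder : ∀ x y : L, T ⁅x, y⁆ = ⁅T x, y⁆ + ⁅x, T y⁆)
    (a b : L) : ∀ n : ℕ, (T ^ n) ⁅a, b⁆
      = ∑ i ∈ Finset.range (n + 1), (n.choose i) • ⁅(T ^ i) a, (T ^ (n - i)) b⁆ := by
  intro n
  induction n with
  | zero => simp
  | succ n ih =>
    rw [pow_succ', Module.End.mul_apply, ih, map_sum]
    have step : ∀ i ∈ Finset.range (n + 1),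
        T ((n.choose i) • ⁅(T ^ i) a, (T ^ (n - i)) b⁆)
          = (n.choose i) • ⁅(T ^ (i+1)) a, (T ^ (n - i)) b⁆
            + (n.choose i) • ⁅(T ^ i) a, (T ^ (n + 1 - i)) b⁆ := by
      intro i hi
      rw [Finset.mem_range] at hi
      have h1 : n + 1 - i = (n - i) + 1 := by omega
      rw [map_nsmul, hder, smul_add, h1, pow_succ', pow_succ']
      rfl
    rw [Finset.sum_congr rfl step, Finset.sum_add_distrib]
    rw [Finset.sum_range_succ'
      (fun i => ((n+1).choose i) • ⁅(T ^ i) a, (T ^ (n + 1 - i)) b⁆) (n+1)]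
    have e1 : ∀ i ∈ Finset.range (n + 1),
        ((n+1).choose (i+1)) • ⁅(T ^ (i+1)) a, (T ^ (n + 1 - (i+1))) b⁆
          = (n.choose i) • ⁅(T ^ (i+1)) a, (T ^ (n - i)) b⁆
            + (n.choose (i+1)) • ⁅(T ^ (i+1)) a, (T ^ (n - i)) b⁆ := by
      intro i hi
      have : n + 1 - (i + 1) = n - i := by omega
      rw [this, Nat.choose_succ_succ, add_smul]
    rw [Finset.sum_congr rfl e1, Finset.sum_add_distrib]
    have hB : (∑ i ∈ Finset.range (n+1), (n.choose i) • ⁅(T ^ i) a, (T ^ (n + 1 - i)) b⁆)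
        = (∑ i ∈ Finset.range (n+1), (n.choose (i+1)) • ⁅(T ^ (i+1)) a, (T ^ (n - i)) b⁆)
          + ⁅a, (T ^ (n+1)) b⁆ := by
      rw [Finset.sum_range_succ'
            (fun i => (n.choose i) • ⁅(T ^ i) a, (T ^ (n + 1 - i)) b⁆) n,
          Finset.sum_range_succ
            (fun i => (n.choose (i+1)) • ⁅(T ^ (i+1)) a, (T ^ (n - i)) b⁆) n]
      simp only [Nat.choose_succ_self, zero_smul, add_zero, Nat.choose_zero_right,
        one_smul, pow_zero, Module.End.one_apply]
      congr 1
      refine Finset.sum_congr rfl fun i hi => ?_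
      rw [Finset.mem_range] at hi
      have : n + 1 - (i+1) = n - i := by omega
      rw [this]
    rw [hB]
    simp only [Nat.choose_zero_right, one_smul, pow_zero, Module.End.one_apply]
    abel

private theorem TpowZero {k L : Type*} [Field k] [AddCommGroup L] [Module k L]
    (T : L →ₗ[k] L) {a : L} {N : ℕ} (ha : (T ^ N) a = 0) {m : ℕ} (hm : N ≤ m) :
    (T ^ m) a = 0 := by
  have : m = (m - N) + N := by omega
  rw [this, pow_add, Module.End.mul_apply, ha, map_zero]

private theorem tau_hom {k L : Type*} [Field k] [CharZero k] [LieRing L] [LieAlgebra k L]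
    (T : L →ₗ[k] L)
    (hder : ∀ x y : L, T ⁅x, y⁆ = ⁅T x, y⁆ + ⁅x, T y⁆)
    (hnil : ∀ x : L, ∃ N, (T ^ N) x = 0)
    (τ : k → L →ₗ[k] L)
    (hτ : ∀ (z : k) (x : L) (N : ℕ), (T ^ N) x = 0 →
      τ z x = ∑ n ∈ Finset.range N, (z ^ n / (n.factorial : k)) • (T ^ n) x)
    (z : k) (a b : L) : τ z ⁅a, b⁆ = ⁅τ z a, τ z b⁆ := by
  obtain ⟨Na, ha⟩ := hnil a
  obtain ⟨Nb, hb⟩ := hnil b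
  set N := Na + Nb with hN
  have hab : (T ^ N) ⁅a, b⁆ = 0 := by
    rw [leibniz_pow' T hder a b N]
    refine Finset.sum_eq_zero fun i hi => ?_
    rcases le_or_gt Na i with h | h
    · rw [TpowZero T ha h, zero_lie, smul_zero]
    · rw [TpowZero T hb (by omega : Nb ≤ N - i), lie_zero, smul_zero]
  set g : ℕ × ℕ → L := fun p =>
    ((z ^ p.1 / (p.1.factorial : k)) * (z ^ p.2 / (p.2.factorial : k))) •
      ⁅(T ^ p.1) a, (T ^ p.2) b⁆ with hg
  have hgzero : ∀ p : ℕ × ℕ, Na ≤ p.1 ∨ Nb ≤ p.2 → g p = 0 := by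
    rintro ⟨i, j⟩ (h | h)
    · simp [hg, TpowZero T ha h]
    · simp [hg, TpowZero T hb h]
  have hRHS : ⁅τ z a, τ z b⁆ = ∑ p ∈ Finset.range N ×ˢ Finset.range N, g p := by
    have sum_lie : ∀ (s : Finset ℕ) (f : ℕ → L) (v : L),
        ⁅∑ i ∈ s, f i, v⁆ = ∑ i ∈ s, ⁅f i, v⁆ := fun s f v =>
      map_sum (AddMonoidHom.mk' (fun u => ⁅u, v⁆) fun a b => add_lie a b v) f s
    have lie_sum : ∀ (u : L) (s : Finset ℕ) (f : ℕ → L),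
        ⁅u, ∑ i ∈ s, f i⁆ = ∑ i ∈ s, ⁅u, f i⁆ := fun u s f =>
      map_sum (AddMonoidHom.mk' (fun v => ⁅u, v⁆) fun a b => lie_add u a b) f s
    rw [Finset.sum_product, hτ z a Na ha, hτ z b Nb hb, sum_lie]
    calc ∑ i ∈ Finset.range Na, ⁅(z ^ i / (i.factorial : k)) • (T ^ i) a,
            ∑ j ∈ Finset.range Nb, (z ^ j / (j.factorial : k)) • (T ^ j) b⁆
        = ∑ i ∈ Finset.range Na, ∑ j ∈ Finset.range Nb, g (i, j) := by
          refine Finset.sum_congr rfl fun i _ => ?_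
          rw [lie_sum]
          exact Finset.sum_congr rfl fun j _ => by
            rw [smul_lie, lie_smul, smul_smul]
      _ = ∑ i ∈ Finset.range Na, ∑ j ∈ Finset.range N, g (i, j) := by
          refine Finset.sum_congr rfl fun i _ => ?_
          exact Finset.sum_subset (Finset.range_subset_range.2 (by omega))
            (fun j _ hj => hgzero (i, j) (Or.inr (by simpa using hj)))
      _ = ∑ i ∈ Finset.range N, ∑ j ∈ Finset.range N, g (i, j) :=
          Finset.sum_subset (Finset.range_subset_range.2 (by omega))
            (fun i _ hi => Finset.sum_eq_zero fun j _ =>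
              hgzero (i, j) (Or.inl (by simpa using hi)))
  have hdisj : (↑(Finset.range N) : Set ℕ).PairwiseDisjoint Finset.HasAntidiagonal.antidiagonal := by
    intro m _ n _ hmn
    simp only [Finset.disjoint_left]
    rintro ⟨i, j⟩ hi hj
    rw [Finset.HasAntidiagonal.mem_antidiagonal] at hi hj
    exact hmn (hi ▸ hj)
  have hLHS : τ z ⁅a, b⁆ = ∑ p ∈ Finset.range N ×ˢ Finset.range N, g p := by
    rw [hτ z ⁅a, b⁆ N hab]
    calc ∑ n ∈ Finset.range N, (z ^ n / (n.factorial : k)) • (T ^ n) ⁅a, b⁆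
        = ∑ n ∈ Finset.range N, ∑ p ∈ Finset.HasAntidiagonal.antidiagonal n, g p := by
          refine Finset.sum_congr rfl fun n _ => ?_
          rw [Finset.Nat.sum_antidiagonal_eq_sum_range_succ_mk, leibniz_pow' T hder a b n,
            Finset.smul_sum]
          refine Finset.sum_congr rfl fun i hi => ?_
          rw [Finset.mem_range] at hi
          have hin : i ≤ n := by omega
          rw [← Nat.cast_smul_eq_nsmul k, smul_smul, hg]
          congr 1
          rw [Nat.cast_choose k hin]
          have : z ^ n = z ^ i * z ^ (n - i) := by rw [← pow_add]; congr 1; omega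
          rw [this]
          have h1 : (n.factorial : k) ≠ 0 := Nat.cast_ne_zero.2 n.factorial_ne_zero
          have h2 : (i.factorial : k) ≠ 0 := Nat.cast_ne_zero.2 i.factorial_ne_zero
          have h3 : ((n - i).factorial : k) ≠ 0 := Nat.cast_ne_zero.2 (n - i).factorial_ne_zero
          field_simp
      _ = ∑ p ∈ (Finset.range N).biUnion Finset.HasAntidiagonal.antidiagonal, g p :=
          (Finset.sum_biUnion hdisj).symm
      _ = ∑ p ∈ Finset.range N ×ˢ Finset.range N, g p := by
          refine Finset.sum_subset ?_ ?_
          · rintro ⟨i, j⟩ hp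
            rw [Finset.mem_biUnion] at hp
            obtain ⟨n, hn, hp⟩ := hp
            rw [Finset.mem_range] at hn
            rw [Finset.HasAntidiagonal.mem_antidiagonal] at hp
            simp only [Finset.mem_product, Finset.mem_range]
            omega
          · rintro ⟨i, j⟩ hp hnp
            rw [Finset.mem_biUnion] at hnp
            push_neg at hnp
            refine hgzero (i, j) ?_
            by_contra hc
            push_neg at hc
            exact hnp (i + j) (Finset.mem_range.2 (by omega))
              (Finset.HasAntidiagonal.mem_antidiagonal.2 rfl)
  rw [hLHS, hRHS]

private theorem map_lie_aux {k L : Type*} [Field k] [CharZero k] [LieRing L] [LieAlgebra k L]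
    (σ : L →ₗ[k] L) (x : L) (hom : ∀ u : L, σ ⁅x, u⁆ = ⁅σ x, σ u⁆)
    (t : L ⊗[k] L) :
    TensorProduct.map σ LinearMap.id ⁅x, t⁆
      = TensorProduct.map ((LieAlgebra.ad k L) (σ x)) LinearMap.id
          (TensorProduct.map σ LinearMap.id t)
        + TensorProduct.map LinearMap.id ((LieAlgebra.ad k L) x)
          (TensorProduct.map σ LinearMap.id t) := by
  induction t using TensorProduct.induction_on with
  | zero => simp
  | tmul u v =>
    simp only [TensorProduct.LieModule.lie_tmul_right, map_add, TensorProduct.map_tmul,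
      LinearMap.id_coe, id_eq, LieAlgebra.ad_apply, hom]
  | add s t hs ht =>
    rw [lie_add, map_add, hs, ht, map_add, map_add, map_add]
    abel

/-- Let `δ : L → L ⊗ L` be a 1-cocycle on a Lie algebra `L` over a
characteristic-zero field (`δ[x,y] = [x, δy] - [y, δx]` for the adjoint action on the
tensor square), let `T` be a locally nilpotent derivation of `L` with
`δ∘T = (T⊗1 + 1⊗T)∘δ`, and let `τ_z = e^{zT}`.  Then `δ_z := (τ_z ⊗ 1)∘δ` satisfies the
translated cocycle identity
`δ_z[x,y] = [τ_z(x)⊗1 + 1⊗x, δ_z(y)] - [τ_z(y)⊗1 + 1⊗y, δ_z(x)]`. -/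
theorem translated_cocycle_identity {k L : Type*} [Field k] [CharZero k]
    [LieRing L] [LieAlgebra k L]
    (T : L →ₗ[k] L)
    (hder : ∀ x y : L, T ⁅x, y⁆ = ⁅T x, y⁆ + ⁅x, T y⁆)
    (hnil : ∀ x : L, ∃ N, (T ^ N) x = 0)
    (τ : k → L →ₗ[k] L)
    (hτ : ∀ (z : k) (x : L) (N : ℕ), (T ^ N) x = 0 →
      τ z x = ∑ n ∈ Finset.range N, (z ^ n / (n.factorial : k)) • (T ^ n) x)
    (δ : L →ₗ[k] L ⊗[k] L)
    (hcoc : ∀ x y : L, δ ⁅x, y⁆ = ⁅x, δ y⁆ - ⁅y, δ x⁆)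
    (hTδ : ∀ x : L, δ (T x)
      = TensorProduct.map T LinearMap.id (δ x) + TensorProduct.map LinearMap.id T (δ x))
    (z : k) (x y : L) :
    TensorProduct.map (τ z) LinearMap.id (δ ⁅x, y⁆)
      = (TensorProduct.map ((LieAlgebra.ad k L) (τ z x)) LinearMap.id
            (TensorProduct.map (τ z) LinearMap.id (δ y))
          + TensorProduct.map LinearMap.id ((LieAlgebra.ad k L) x)
            (TensorProduct.map (τ z) LinearMap.id (δ y)))
        - (TensorProduct.map ((LieAlgebra.ad k L) (τ z y)) LinearMap.id
            (TensorProduct.map (τ z) LinearMap.id (δ x))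
          + TensorProduct.map LinearMap.id ((LieAlgebra.ad k L) y)
            (TensorProduct.map (τ z) LinearMap.id (δ x))) := by
  rw [hcoc, map_sub,
    map_lie_aux (τ z) x (fun u => tau_hom T hder hnil τ hτ z x u) (δ y),
    map_lie_aux (τ z) y (fun u => tau_hom T hder hnil τ hτ z y u) (δ x)]
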